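/- The space of derivations Der(K_N) has complex dimension N + N², with a basis given by the derivations ∂_k (k = 1,…,N) and ∂_k^l (k, l = 1,…,N). -/

import Mathlib

open Complex BigOperators

/-- The generalized Kronecker algebra `K_N`: elements `λ•1 + μ•e + ∑ aⁱ αᵢ`
represented by their coefficients. -/
@[ext] structure Kron (N : ℕ) where
  lam : ℂ
  mu : ℂ
  al : Fin N → ℂ

namespace Kron

variable {N : ℕ}

instance : Zero (Kron N) := ⟨⟨0, 0, fun _ => 0⟩⟩
instance : One (Kron N) := ⟨⟨1, 0, fun _ => 0⟩⟩
instance : Add (Kron N) := ⟨fun x y => ⟨x.lam + y.lam, x.mu + y.mu, fun i => x.al i + y.al i⟩⟩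
instance : Neg (Kron N) := ⟨fun x => ⟨-x.lam, -x.mu, fun i => -x.al i⟩⟩
instance : Mul (Kron N) :=
  ⟨fun x y => ⟨x.lam * y.lam, x.lam * y.mu + y.lam * x.mu + x.mu * y.mu,
    fun i => (x.lam + x.mu) * y.al i + y.lam * x.al i⟩⟩
instance : SMul ℂ (Kron N) := ⟨fun c x => ⟨c * x.lam, c * x.mu, fun i => c * x.al i⟩⟩

@[simp] lemma mk_lam (l m : ℂ) (v : Fin N → ℂ) : (Kron.mk l m v).lam = l := rfl
@[simp] lemma mk_mu (l m : ℂ) (v : Fin N → ℂ) : (Kron.mk l m v).mu = m := rfl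
@[simp] lemma mk_al (l m : ℂ) (v : Fin N → ℂ) (i : Fin N) : (Kron.mk l m v).al i = v i := rfl
@[simp] lemma zero_lam : (0 : Kron N).lam = 0 := rfl
@[simp] lemma zero_mu : (0 : Kron N).mu = 0 := rfl
@[simp] lemma zero_al (i : Fin N) : (0 : Kron N).al i = 0 := rfl
@[simp] lemma one_lam : (1 : Kron N).lam = 1 := rfl
@[simp] lemma one_mu : (1 : Kron N).mu = 0 := rfl
@[simp] lemma one_al (i : Fin N) : (1 : Kron N).al i = 0 := rfl
@[simp] lemma add_lam (x y : Kron N) : (x + y).lam = x.lam + y.lam := rfl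
@[simp] lemma add_mu (x y : Kron N) : (x + y).mu = x.mu + y.mu := rfl
@[simp] lemma add_al (x y : Kron N) (i : Fin N) : (x + y).al i = x.al i + y.al i := rfl
@[simp] lemma neg_lam (x : Kron N) : (-x).lam = -x.lam := rfl
@[simp] lemma neg_mu (x : Kron N) : (-x).mu = -x.mu := rfl
@[simp] lemma neg_al (x : Kron N) (i : Fin N) : (-x).al i = -x.al i := rfl
@[simp] lemma mul_lam (x y : Kron N) : (x * y).lam = x.lam * y.lam := rfl
@[simp] lemma mul_mu (x y : Kron N) :
    (x * y).mu = x.lam * y.mu + y.lam * x.mu + x.mu * y.mu := rfl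
@[simp] lemma mul_al (x y : Kron N) (i : Fin N) :
    (x * y).al i = (x.lam + x.mu) * y.al i + y.lam * x.al i := rfl
@[simp] lemma smul_lam (c : ℂ) (x : Kron N) : (c • x).lam = c * x.lam := rfl
@[simp] lemma smul_mu (c : ℂ) (x : Kron N) : (c • x).mu = c * x.mu := rfl
@[simp] lemma smul_al (c : ℂ) (x : Kron N) (i : Fin N) : (c • x).al i = c * x.al i := rfl

instance : AddCommGroup (Kron N) where
  add_assoc := by intros; ext <;> simp <;> ring
  zero_add := by intros; ext <;> simp
  add_zero := by intros; ext <;> simp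
  add_comm := by intros; ext <;> simp <;> ring
  neg_add_cancel := by intros; ext <;> simp
  nsmul := nsmulRec
  zsmul := zsmulRec

instance : Ring (Kron N) :=
  { (inferInstance : AddCommGroup (Kron N)) with
    left_distrib := by intros; ext <;> simp <;> ring
    right_distrib := by intros; ext <;> simp <;> ring
    zero_mul := by intros; ext <;> simp
    mul_zero := by intros; ext <;> simp
    mul_assoc := by intros; ext <;> simp <;> ring
    one_mul := by intros; ext <;> simp
    mul_one := by intros; ext <;> simp }

instance : Module ℂ (Kron N) where
  one_smul := by intros; ext <;> simp
  mul_smul := by intros; ext <;> simp <;> ring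
  smul_zero := by intros; ext <;> simp
  smul_add := by intros; ext <;> simp <;> ring
  add_smul := by intros; ext <;> simp <;> ring
  zero_smul := by intros; ext <;> simp

instance : Algebra ℂ (Kron N) :=
  Algebra.ofModule (fun _ _ _ => by ext <;> simp <;> ring)
    (fun _ _ _ => by ext <;> simp <;> ring)

/-- The idempotent generator `e`. -/
def e : Kron N := ⟨0, 1, fun _ => 0⟩

/-- The arrow generators `α i`. -/
def α (i : Fin N) : Kron N := ⟨0, 0, fun j => if j = i then 1 else 0⟩

@[simp] lemma e_lam : (e : Kron N).lam = 0 := rfl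
@[simp] lemma e_mu : (e : Kron N).mu = 1 := rfl
@[simp] lemma e_al (i : Fin N) : (e : Kron N).al i = 0 := rfl
@[simp] lemma α_lam (i : Fin N) : (α i : Kron N).lam = 0 := rfl
@[simp] lemma α_mu (i : Fin N) : (α i : Kron N).mu = 0 := rfl
@[simp] lemma α_al (i j : Fin N) : (α i : Kron N).al j = if j = i then 1 else 0 := rfl

/-- The `*`-structure: `(λ1 + μe + aⁱαᵢ)* = (λ̄+μ̄)1 − μ̄e + āⁱαᵢ`. -/
instance : Star (Kron N) :=
  ⟨fun x => ⟨starRingEnd ℂ x.lam + starRingEnd ℂ x.mu, -(starRingEnd ℂ x.mu),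
    fun i => starRingEnd ℂ (x.al i)⟩⟩

@[simp] lemma star_lam (x : Kron N) :
    (star x).lam = starRingEnd ℂ x.lam + starRingEnd ℂ x.mu := rfl
@[simp] lemma star_mu (x : Kron N) : (star x).mu = -(starRingEnd ℂ x.mu) := rfl
@[simp] lemma star_al (x : Kron N) (i : Fin N) : (star x).al i = starRingEnd ℂ (x.al i) := rfl

/-- The derivation `∂_k` with `∂_k e = i α_k`, `∂_k α_l = 0`. -/
def dK (k : Fin N) : Kron N →ₗ[ℂ] Kron N where
  toFun x := ⟨0, 0, fun j => x.mu * Complex.I * (if j = k then 1 else 0)⟩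
  map_add' := by intros; ext <;> simp <;> (try split) <;> ring
  map_smul' := by intros; ext <;> simp <;> (try split) <;> ring

/-- The derivation `∂_k^l` with `∂_k^l e = 0`, `∂_k^l α_j = δ_j^l α_k`. -/
def dKK (k l : Fin N) : Kron N →ₗ[ℂ] Kron N where
  toFun x := ⟨0, 0, fun j => x.al l * (if j = k then 1 else 0)⟩
  map_add' := by intros; ext <;> simp <;> (try split) <;> ring
  map_smul' := by intros; ext <;> simp <;> (try split) <;> ring

end Kron

namespace Kron

variable {N : ℕ}

lemma al_sum {ι : Type*} (s : Finset ι) (f : ι → Kron N) (j : Fin N) :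
    (∑ i ∈ s, f i).al j = ∑ i ∈ s, (f i).al j := by
  classical
  induction s using Finset.induction with
  | empty => simp
  | insert _ _ h ih => simp [Finset.sum_insert h, ih]

lemma lam_sum {ι : Type*} (s : Finset ι) (f : ι → Kron N) :
    (∑ i ∈ s, f i).lam = ∑ i ∈ s, (f i).lam := by
  classical
  induction s using Finset.induction with
  | empty => simp
  | insert _ _ h ih => simp [Finset.sum_insert h, ih]

lemma mu_sum {ι : Type*} (s : Finset ι) (f : ι → Kron N) :
    (∑ i ∈ s, f i).mu = ∑ i ∈ s, (f i).mu := by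
  classical
  induction s using Finset.induction with
  | empty => simp
  | insert _ _ h ih => simp [Finset.sum_insert h, ih]

@[simp] lemma dK_apply (k : Fin N) (x : Kron N) :
    dK k x = ⟨0, 0, fun j => x.mu * Complex.I * (if j = k then 1 else 0)⟩ := rfl

@[simp] lemma dKK_apply (k l : Fin N) (x : Kron N) :
    dKK k l x = ⟨0, 0, fun j => x.al l * (if j = k then 1 else 0)⟩ := rfl

lemma e_mul_e : (e : Kron N) * e = e := by ext <;> simp

lemma e_mul_α (l : Fin N) : (e : Kron N) * α l = α l := by ext <;> simp

lemma α_mul_e (l : Fin N) : (α l : Kron N) * e = 0 := by ext <;> simp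

lemma decomp (x : Kron N) : x = x.lam • 1 + x.mu • e + ∑ i, x.al i • α i := by
  ext j
  · simp [lam_sum]
  · simp [mu_sum]
  · simp [al_sum, mul_ite]

lemma dK_isDer (k : Fin N) (x y : Kron N) :
    dK k (x * y) = dK k x * y + x * dK k y := by
  ext j <;> simp <;> by_cases h : j = k <;> simp [h] <;> ring

lemma dKK_isDer (k l : Fin N) (x y : Kron N) :
    dKK k l (x * y) = dKK k l x * y + x * dKK k l y := by
  ext j <;> simp <;> by_cases h : j = k <;> simp [h] <;> ring

end Kron

theorem stmt_6' (N : ℕ) :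
    LinearIndependent ℂ
      (Sum.elim Kron.dK (fun p : Fin N × Fin N => Kron.dKK p.1 p.2)) ∧
    (Submodule.span ℂ
        (Set.range (Sum.elim Kron.dK (fun p : Fin N × Fin N => Kron.dKK p.1 p.2))) :
        Set (Kron N →ₗ[ℂ] Kron N)) =
      {δ : Kron N →ₗ[ℂ] Kron N | ∀ x y : Kron N, δ (x * y) = δ x * y + x * δ y} ∧
    Module.finrank ℂ
      (Submodule.span ℂ
        (Set.range (Sum.elim Kron.dK (fun p : Fin N × Fin N => Kron.dKK p.1 p.2)))) =
      N + N ^ 2 := by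
  have hli : LinearIndependent ℂ
      (Sum.elim Kron.dK (fun p : Fin N × Fin N => Kron.dKK p.1 p.2)) := by
    rw [Fintype.linearIndependent_iff]
    intro g hg i
    have hgα : ∀ z : Kron N,
        (∑ i : Fin N ⊕ Fin N × Fin N,
          g i • Sum.elim Kron.dK (fun p : Fin N × Fin N => Kron.dKK p.1 p.2) i) z = 0 := by
      intro z; rw [hg]; rfl
    rcases i with k | p
    · have := congrArg (fun w => w.al k) (hgα Kron.e)
      simp [LinearMap.sum_apply, Kron.al_sum, Fintype.sum_sum_type, mul_ite,
        Finset.sum_ite_eq'] at this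
      simpa [Complex.I_ne_zero] using this
    · have := congrArg (fun w => w.al p.1) (hgα (Kron.α p.2))
      simp [LinearMap.sum_apply, Kron.al_sum, Fintype.sum_sum_type, Fintype.sum_prod_type,
        mul_ite, Finset.sum_ite_eq', Finset.sum_ite_eq] at this
      exact this
  refine ⟨hli, ?_, ?_⟩
  · ext δ
    simp only [SetLike.mem_coe, Set.mem_setOf_eq]
    constructor
    · intro hδ
      refine Submodule.span_induction ?_ ?_ ?_ ?_ hδ
      · rintro f ⟨i, rfl⟩
        rcases i with k | p
        · exact Kron.dK_isDer k
        · exact Kron.dKK_isDer p.1 p.2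
      · intro x y; simp
      · intro f g _ _ hf hg x y
        simp only [LinearMap.add_apply, hf, hg, add_mul, mul_add]
        abel
      · intro c f _ hf x y
        simp only [LinearMap.smul_apply, hf, smul_add, smul_mul_assoc, mul_smul_comm]
    · intro hδ
      have h1 : δ 1 = 0 := by
        have h := hδ 1 1
        rw [mul_one, mul_one, one_mul] at h
        exact (left_eq_add.mp h)
      have he := hδ Kron.e Kron.e
      rw [Kron.e_mul_e] at he
      have heL : (δ Kron.e).lam = 0 := by
        have := congrArg Kron.lam he; simpa using this
      have heM : (δ Kron.e).mu = 0 := by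
        have := congrArg Kron.mu he
        simp [heL] at this
        linear_combination this
      have hαL : ∀ l, (δ (Kron.α l)).lam = 0 := by
        intro l
        have h2 := hδ Kron.e (Kron.α l)
        rw [Kron.e_mul_α] at h2
        have := congrArg Kron.lam h2
        simpa [heL] using this
      have hαM : ∀ l, (δ (Kron.α l)).mu = 0 := by
        intro l
        have h2 := hδ (Kron.α l) Kron.e
        rw [Kron.α_mul_e, map_zero] at h2
        have := congrArg Kron.mu h2
        simp [hαL l] at this
        exact this.symm
      have key : δ = (∑ k, (-Complex.I * (δ Kron.e).al k) • Kron.dK k)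
          + ∑ p : Fin N × Fin N, ((δ (Kron.α p.2)).al p.1) • Kron.dKK p.1 p.2 := by
        apply LinearMap.ext; intro x
        have hx : δ x = x.lam • δ 1 + x.mu • δ Kron.e + ∑ i, x.al i • δ (Kron.α i) := by
          conv_lhs => rw [Kron.decomp x]
          simp [map_sum]
        rw [hx, h1]
        ext j
        · simp [Kron.lam_sum, heL, hαL, LinearMap.sum_apply, LinearMap.add_apply]
        · simp [Kron.mu_sum, heM, hαM, LinearMap.sum_apply, LinearMap.add_apply]
        · simp [Kron.al_sum, LinearMap.sum_apply, LinearMap.add_apply, Fintype.sum_prod_type,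
            mul_ite, Finset.sum_ite_eq', Finset.sum_ite_eq]
          ring_nf
          rw [Complex.I_sq]
          ring_nf
          congr 1
          exact Finset.sum_congr rfl fun i _ => by ring
      rw [key]
      apply Submodule.add_mem
      · apply Submodule.sum_mem
        intro k _
        exact Submodule.smul_mem _ _ (Submodule.subset_span ⟨Sum.inl k, rfl⟩)
      · apply Submodule.sum_mem
        intro p _
        exact Submodule.smul_mem _ _ (Submodule.subset_span ⟨Sum.inr p, rfl⟩)
  · rw [finrank_span_eq_card hli]
    simp [Fintype.card_sum, Fintype.card_prod]
    ring


/-- `Der(K_N)` has dimension `N + N²`, with basis `{∂_k} ∪ {∂_k^l}`. -/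
theorem stmt_6 (N : ℕ) :
    LinearIndependent ℂ
      (Sum.elim Kron.dK (fun p : Fin N × Fin N => Kron.dKK p.1 p.2)) ∧
    (Submodule.span ℂ
        (Set.range (Sum.elim Kron.dK (fun p : Fin N × Fin N => Kron.dKK p.1 p.2))) :
        Set (Kron N →ₗ[ℂ] Kron N)) =
      {δ : Kron N →ₗ[ℂ] Kron N | ∀ x y : Kron N, δ (x * y) = δ x * y + x * δ y} ∧
    Module.finrank ℂ
      (Submodule.span ℂ
        (Set.range (Sum.elim Kron.dK (fun p : Fin N × Fin N => Kron.dKK p.1 p.2)))) =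
      N + N ^ 2 := by
  exact stmt_6' N
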